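/- Fix z > 0 and q, r ∈ ℝ². Then (r₀²/(4π)) ∫_{ℝ²} exp( −r₀²|ζ|²/4 + i ζ·r ) · exp( (k₀²/4) ∫₀^z [ C(q − ζ z'/k₀) − C(0) ] dz' ) dζ converges to exp( (k₀²/4) ( C(q) − C(0) ) z ) as r₀ → ∞; that is, in the plane-wave (infinite initial beam radius) limit the mutual coherence function equals exp( k₀² ( C(q) − C(0) ) z / 4 ). -/

import Mathlib

open MeasureTheory Filter Set Topology Complex
open scoped Real ENNReal NNReal InnerProductSpace

noncomputable section

abbrev E2 : Type := EuclideanSpace ℝ (Fin 2)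

/-- The Gaussian integral over the plane. -/
lemma aux_gauss_integral : ∫ u : E2, Complex.exp (((-(‖u‖ ^ 2) : ℝ) : ℂ)) = (π : ℂ) := by
  have h := GaussianFourier.integral_cexp_neg_mul_sq_norm (V := E2) (b := 1) (by norm_num)
  simp only [finrank_euclideanSpace_fin] at h
  rw [show ((2:ℕ)/2 : ℂ) = 1 by norm_num] at h
  simp only [cpow_one, div_one] at h
  rw [← h]
  congr 1 with u
  push_cast
  ring_nf

/-- Integrability of the planar Gaussian. -/
lemma aux_gauss_integrable : Integrable (fun u : E2 => Real.exp (-(‖u‖ ^ 2))) := by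
  have h := (GaussianFourier.integrable_cexp_neg_mul_sq_norm_add (V := E2) (b := 1)
    (by norm_num) 0 0).norm
  apply h.congr
  filter_upwards with u
  rw [Complex.norm_exp]
  simp [← Complex.ofReal_pow]

/-- **plane-wave limit of the mutual coherence function.** As the initial beam
radius `r₀ → ∞`, the mutual coherence integral converges to
`exp( (k₀²/4)(C(q) − C(0)) z )`. -/
theorem statement18
    (k₀ : ℝ) (hk₀ : 0 < k₀)
    (C : E2 → ℝ) (hCcont : Continuous C) (hCbdd : ∃ M : ℝ, ∀ x : E2, |C x| ≤ M)
    (z : ℝ) (hz : 0 < z) (q r : E2) :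
    Tendsto
      (fun r₀ : ℝ =>
        ((r₀ ^ 2 / (4 * π) : ℝ) : ℂ) *
          ∫ ζ : E2,
            Complex.exp
              (((-(r₀ ^ 2 * ‖ζ‖ ^ 2) / 4 : ℝ) : ℂ) + Complex.I * ((⟪ζ, r⟫_ℝ : ℝ) : ℂ))
            * Complex.exp
                ((((k₀ ^ 2 / 4) * ∫ z' in (0:ℝ)..z, (C (q - (z' / k₀) • ζ) - C 0) : ℝ) : ℂ)))
      atTop
      (𝓝 (Complex.exp ((((k₀ ^ 2 / 4) * (C q - C 0) * z : ℝ) : ℂ)))) := by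
  obtain ⟨M, hM⟩ := hCbdd
  have hM0 : 0 ≤ M := le_trans (abs_nonneg _) (hM 0)
  -- the inner (longitudinal) integral as a function of the transverse point
  set J : E2 → ℝ := fun w => ∫ z' in (0:ℝ)..z, (C (q - (z' / k₀) • w) - C 0) with hJdef
  have hJcont : Continuous J := by
    apply intervalIntegral.continuous_parametric_intervalIntegral_of_continuous'
    fun_prop
  have hJbound : ∀ w : E2, |J w| ≤ 2 * M * z := by
    intro w
    have h1 : |J w| ≤ ∫ z' in (0:ℝ)..z, |C (q - (z' / k₀) • w) - C 0| :=
      intervalIntegral.abs_integral_le_integral_abs hz.le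
    have h2 : (∫ z' in (0:ℝ)..z, |C (q - (z' / k₀) • w) - C 0|)
        ≤ ∫ _z' in (0:ℝ)..z, (2 * M) := by
      apply intervalIntegral.integral_mono_on hz.le _ intervalIntegrable_const
      · intro t _
        calc |C (q - (t / k₀) • w) - C 0| ≤ |C (q - (t / k₀) • w)| + |C 0| := abs_sub _ _
          _ ≤ M + M := add_le_add (hM _) (hM _)
          _ = 2 * M := by ring
      · exact (((hCcont.comp (by fun_prop)).sub continuous_const).abs).intervalIntegrable 0 z
    have h3 : (∫ _z' in (0:ℝ)..z, (2 * M : ℝ)) = 2 * M * z := by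
      simp [intervalIntegral.integral_const]
      ring
    linarith [h1.trans h2]
  -- the rescaled integrand
  set Φ : ℝ → E2 → ℂ := fun ε u =>
      Complex.exp (((-(‖u‖ ^ 2) : ℝ) : ℂ) + Complex.I * ((ε * ⟪u, r⟫_ℝ : ℝ) : ℂ)) *
        Complex.exp ((((k₀ ^ 2 / 4) * J (ε • u) : ℝ) : ℂ)) with hΦdef
  have hΦnorm : ∀ ε (u : E2),
      ‖Φ ε u‖ = Real.exp (-(‖u‖ ^ 2)) * Real.exp ((k₀ ^ 2 / 4) * J (ε • u)) := by
    intro ε u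
    rw [hΦdef]
    simp only [norm_mul, Complex.norm_exp]
    congr 2
    all_goals simp [← Complex.ofReal_pow]
  -- dominating function
  set B : E2 → ℝ := fun u =>
      Real.exp (-(‖u‖ ^ 2)) * Real.exp ((k₀ ^ 2 / 4) * (2 * M * z)) with hBdef
  have hBint : Integrable B := aux_gauss_integrable.mul_const _
  have hΦle : ∀ ε (u : E2), ‖Φ ε u‖ ≤ B u := by
    intro ε u
    rw [hΦnorm]
    refine mul_le_mul_of_nonneg_left ?_ (Real.exp_nonneg _)
    exact Real.exp_le_exp.2 (mul_le_mul_of_nonneg_left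
      (le_of_abs_le (hJbound _)) (by positivity))
  have hΦcont_u : ∀ ε : ℝ, Continuous fun u : E2 => Φ ε u := by
    intro ε
    rw [hΦdef]
    refine Continuous.mul (Complex.continuous_exp.comp ?_) (Complex.continuous_exp.comp ?_)
    · exact (Complex.continuous_ofReal.comp (continuous_norm.pow 2).neg).add
        (continuous_const.mul (Complex.continuous_ofReal.comp
          (continuous_const.mul (continuous_id.inner continuous_const))))
    · exact Complex.continuous_ofReal.comp
        (continuous_const.mul (hJcont.comp (continuous_const_smul ε)))
  have hΦcont_ε : ∀ u : E2, Continuous fun ε : ℝ => Φ ε u := by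
    intro u
    rw [hΦdef]
    fun_prop
  -- dominated convergence as ε → 0
  have key : Tendsto (fun ε : ℝ => ∫ u : E2, Φ ε u) (𝓝 0) (𝓝 (∫ u : E2, Φ 0 u)) := by
    apply tendsto_integral_filter_of_dominated_convergence B
    · filter_upwards with ε
      exact (hΦcont_u ε).aestronglyMeasurable
    · filter_upwards with ε
      filter_upwards with u
      exact hΦle ε u
    · exact hBint
    · filter_upwards with u
      exact ((hΦcont_ε u).tendsto 0)
  -- value of the limit integral
  have hJ0 : J (0 : E2) = z * (C q - C 0) := by
    rw [hJdef]
    simp [intervalIntegral.integral_const]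
    ring
  have hL : ∫ u : E2, Φ 0 u
      = (π : ℂ) * Complex.exp ((((k₀ ^ 2 / 4) * (C q - C 0) * z : ℝ) : ℂ)) := by
    have : ∀ u : E2, Φ 0 u = Complex.exp (((-(‖u‖ ^ 2) : ℝ) : ℂ)) *
        Complex.exp ((((k₀ ^ 2 / 4) * (C q - C 0) * z : ℝ) : ℂ)) := by
      intro u
      rw [hΦdef]
      simp only [zero_smul, hJ0, zero_mul]
      push_cast
      ring_nf
    simp_rw [this]
    rw [MeasureTheory.integral_mul_const, aux_gauss_integral]
  have hπ : (π : ℂ) ≠ 0 := Complex.ofReal_ne_zero.2 Real.pi_ne_zero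
  -- 2/r₀ → 0 as r₀ → ∞
  have hε : Tendsto (fun r₀ : ℝ => 2 / r₀) atTop (𝓝 0) := by
    simpa [div_eq_mul_inv] using tendsto_inv_atTop_zero.const_mul (2:ℝ)
  have main := (key.comp hε).const_mul ((π : ℂ)⁻¹)
  have hval : (π : ℂ)⁻¹ * ∫ u : E2, Φ 0 u
      = Complex.exp ((((k₀ ^ 2 / 4) * (C q - C 0) * z : ℝ) : ℂ)) := by
    rw [hL, ← mul_assoc, inv_mul_cancel₀ hπ, one_mul]
  rw [hval] at main
  -- identify with the original expression for r₀ > 0, by change of variables ζ = (2/r₀) • u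
  apply main.congr'
  filter_upwards [eventually_gt_atTop (0:ℝ)] with r₀ hr₀
  have hr₀' : r₀ ≠ 0 := hr₀.ne'
  set c : ℝ := 2 / r₀ with hcdef
  have hc : 0 < c := by positivity
  set f : E2 → ℂ := fun ζ =>
      Complex.exp (((-(r₀ ^ 2 * ‖ζ‖ ^ 2) / 4 : ℝ) : ℂ) + Complex.I * ((⟪ζ, r⟫_ℝ : ℝ) : ℂ)) *
        Complex.exp ((((k₀ ^ 2 / 4) * J ζ : ℝ) : ℂ)) with hfdef
  have hΦeq : ∀ u : E2, f (c • u) = Φ c u := by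
    intro u
    have e1 : -(r₀ ^ 2 * ‖c • u‖ ^ 2) / 4 = -(‖u‖ ^ 2) := by
      rw [norm_smul, Real.norm_eq_abs, abs_of_pos hc, mul_pow, hcdef]
      field_simp
      ring
    have e2 : ⟪c • u, r⟫_ℝ = c * ⟪u, r⟫_ℝ := real_inner_smul_left _ _ _
    simp only [hfdef, hΦdef, e1, e2]
  have hcv : ∫ u : E2, f (c • u) = ((c ^ 2)⁻¹ : ℝ) • ∫ ζ : E2, f ζ := by
    simpa [finrank_euclideanSpace_fin] using
      MeasureTheory.Measure.integral_comp_smul_of_nonneg (volume : Measure E2) f c (hR := hc.le)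
  have hcv' : ∫ ζ : E2, f ζ = ((c ^ 2 : ℝ)) • ∫ u : E2, f (c • u) := by
    rw [hcv, smul_smul, mul_inv_cancel₀ (by positivity), one_smul]
  show (π : ℂ)⁻¹ * (∫ u : E2, Φ (2 / r₀) u)
      = ((r₀ ^ 2 / (4 * π) : ℝ) : ℂ) * ∫ ζ : E2, f ζ
  rw [hcv']
  have : (∫ u : E2, f (c • u)) = ∫ u : E2, Φ (2 / r₀) u := by
    congr 1 with u
    rw [hΦeq u, hcdef]
  rw [this, Complex.real_smul, ← mul_assoc]
  congr 1
  rw [hcdef]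
  have hr₀c : (r₀ : ℂ) ≠ 0 := Complex.ofReal_ne_zero.2 hr₀'
  push_cast
  field_simp
  ring
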